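/- Let n, p₁, p₂, q be natural numbers, H > 0, D ⊆ ℝⁿ. Let u : [0,H] → ℝ^q, Θ_top : ℝⁿ × ℝ^q → L(ℝ^{p₁}, ℝⁿ), Θ_fix : ℝⁿ × ℝ^q → L(ℝ^{p₂}, ℝⁿ), ξ_tv, ξ̂_tv : [0,H] → ℝ^{p₁}, and ξ̄ ∈ ℝ^{p₂}. Define f_tv(t,x) := Θ_top(x,u(t)) ξ_tv(t) + Θ_fix(x,u(t)) ξ̄ and f̂_tv(t,x) := Θ_top(x,u(t)) ξ̂_tv(t) + Θ_fix(x,u(t)) ξ̄. Assume: (i) for each t ∈ [0,H], x ↦ f_tv(t,x) is Lipschitz on D with constant L > 0; (ii) ‖Θ_top(x,u(t))‖_op ≤ B_top for all (t,x) ∈ [0,H] × D with B_top > 0; (iii) ‖ξ̂_tv(t) − ξ_tv(t)‖ ≤ ε_top for all t ∈ [0,H] with ε_top ≥ 0. Let x : [0,H] → D solve x'(t) = f_tv(t,x(t)) and x̂ : [0,H] → D solve x̂'(t) = f̂_tv(t,x̂(t)) with x(0) = x̂(0), and suppose x(t), x̂(t) ∈ D for all t ∈ [0,H]. Then for all t ∈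 [0,H], ‖x(t) − x̂(t)‖ ≤ (B_top ε_top / L)·(e^{L t} − 1) ≤ (B_top ε_top / L)·(e^{L H} − 1). -/

import Mathlib

/-- **Split-model forecast bound: only the top-N coefficient forecast errors enter.**
For the split model `f_tv(t,x) = Θ_top(x,u(t)) ξ_tv(t) + Θ_fix(x,u(t)) ξ̄` and its
forecast counterpart with `ξ_tv` replaced by `ξ̂_tv`, if `f_tv` is Lipschitz in the
state on `D` with constant `L > 0`, `‖Θ_top(x,u(t))‖_op ≤ B_top` on `[0,H] × D`, and
`‖ξ̂_tv(t) - ξ_tv(t)‖ ≤ ε_top` on `[0,H]`, then for trajectories `x`, `x̂` in `D` with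
the same initial condition,
`‖x t - x̂ t‖ ≤ (B_top ε_top / L)·(e^{Lt} - 1) ≤ (B_top ε_top / L)·(e^{LH} - 1)`. -/
theorem split_model_forecast_error_bound
    (n p₁ p₂ q : ℕ) (H L Btop εtop : ℝ) (hH : 0 < H) (hL : 0 < L)
    (hBtop : 0 < Btop) (hεtop : 0 ≤ εtop)
    (D : Set (EuclideanSpace ℝ (Fin n)))
    (u : ℝ → EuclideanSpace ℝ (Fin q))
    (Θtop : EuclideanSpace ℝ (Fin n) → EuclideanSpace ℝ (Fin q) →
        (EuclideanSpace ℝ (Fin p₁) →L[ℝ] EuclideanSpace ℝ (Fin n)))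
    (Θfix : EuclideanSpace ℝ (Fin n) → EuclideanSpace ℝ (Fin q) →
        (EuclideanSpace ℝ (Fin p₂) →L[ℝ] EuclideanSpace ℝ (Fin n)))
    (ξtv ξhtv : ℝ → EuclideanSpace ℝ (Fin p₁))
    (ξbar : EuclideanSpace ℝ (Fin p₂))
    (hLip : ∀ t ∈ Set.Icc (0:ℝ) H, ∀ a ∈ D, ∀ b ∈ D,
      ‖(Θtop a (u t) (ξtv t) + Θfix a (u t) ξbar)
        - (Θtop b (u t) (ξtv t) + Θfix b (u t) ξbar)‖ ≤ L * ‖a - b‖)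
    (hop : ∀ t ∈ Set.Icc (0:ℝ) H, ∀ x ∈ D, ‖Θtop x (u t)‖ ≤ Btop)
    (hpar : ∀ t ∈ Set.Icc (0:ℝ) H, ‖ξhtv t - ξtv t‖ ≤ εtop)
    (x xh : ℝ → EuclideanSpace ℝ (Fin n))
    (hxD : ∀ t ∈ Set.Icc (0:ℝ) H, x t ∈ D)
    (hxhD : ∀ t ∈ Set.Icc (0:ℝ) H, xh t ∈ D)
    (hx : ∀ t ∈ Set.Icc (0:ℝ) H,
      HasDerivAt x (Θtop (x t) (u t) (ξtv t) + Θfix (x t) (u t) ξbar) t)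
    (hxh : ∀ t ∈ Set.Icc (0:ℝ) H,
      HasDerivAt xh (Θtop (xh t) (u t) (ξhtv t) + Θfix (xh t) (u t) ξbar) t)
    (h0 : x 0 = xh 0) :
    ∀ t ∈ Set.Icc (0:ℝ) H,
      ‖x t - xh t‖ ≤ (Btop * εtop / L) * (Real.exp (L * t) - 1) ∧
      ‖x t - xh t‖ ≤ (Btop * εtop / L) * (Real.exp (L * H) - 1) := by
  intro t ht
  set v : ℝ → EuclideanSpace ℝ (Fin n) → EuclideanSpace ℝ (Fin n) :=
    fun s y => if s ∈ Set.Icc (0:ℝ) H then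
      Θtop y (u s) (ξtv s) + Θfix y (u s) ξbar else 0 with hv_def
  have hKc : (L.toNNReal : ℝ) = L := Real.coe_toNNReal L hL.le
  have hv : ∀ s, LipschitzOnWith L.toNNReal (v s) D := by
    intro s
    rw [lipschitzOnWith_iff_dist_le_mul]
    intro a ha b hb
    by_cases hs : s ∈ Set.Icc (0:ℝ) H
    · simp only [hv_def, hs, if_pos, dist_eq_norm, hKc]
      exact hLip s hs a ha b hb
    · have hs' : ¬(0 ≤ s ∧ s ≤ H) := by simpa [Set.mem_Icc] using hs
      simp only [v, Set.mem_Icc, if_neg hs', dist_self, hKc]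
      positivity
  have hxc : ContinuousOn x (Set.Icc 0 H) := fun s hs =>
    ((hx s hs).continuousAt).continuousWithinAt
  have hxhc : ContinuousOn xh (Set.Icc 0 H) := fun s hs =>
    ((hxh s hs).continuousAt).continuousWithinAt
  have hmem : ∀ s ∈ Set.Ico (0:ℝ) H, s ∈ Set.Icc (0:ℝ) H := fun s hs =>
    Set.Ico_subset_Icc_self hs
  have key := dist_le_of_approx_trajectories_ODE_of_mem (v := v) (s := fun _ => D)
    (K := L.toNNReal) (εf := 0) (εg := Btop * εtop) (δ := 0) (fun s _ => hv s) hxc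
    (fun s hs => ((hx s (hmem s hs)).hasDerivWithinAt))
    (f_bound := fun s hs => by
      simp only [hv_def, hmem s hs, if_pos, dist_self]
      simp [Set.mem_Icc.mp (hmem s hs)])
    (fun s hs => hxD s (hmem s hs)) hxhc
    (fun s hs => ((hxh s (hmem s hs)).hasDerivWithinAt))
    (g_bound := fun s hs => by
      have hsI := hmem s hs
      simp only [hv_def, hsI, if_pos, dist_eq_norm]
      have : Θtop (xh s) (u s) (ξhtv s) + Θfix (xh s) (u s) ξbar -
          (Θtop (xh s) (u s) (ξtv s) + Θfix (xh s) (u s) ξbar)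
          = Θtop (xh s) (u s) (ξhtv s - ξtv s) := by
        rw [map_sub]; abel
      calc ‖Θtop (xh s) (u s) (ξhtv s) + Θfix (xh s) (u s) ξbar -
          (Θtop (xh s) (u s) (ξtv s) + Θfix (xh s) (u s) ξbar)‖
          = ‖Θtop (xh s) (u s) (ξhtv s - ξtv s)‖ := by rw [this]
        _ ≤ ‖Θtop (xh s) (u s)‖ * ‖ξhtv s - ξtv s‖ :=
            (Θtop (xh s) (u s)).le_opNorm _
        _ ≤ Btop * εtop :=
            mul_le_mul (hop s hsI _ (hxhD s hsI)) (hpar s hsI) (norm_nonneg _)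
              hBtop.le)
    (fun s hs => hxhD s (hmem s hs))
    (le_of_eq (by rw [h0, dist_self])) t ht
  rw [dist_eq_norm] at key
  have hgb : gronwallBound 0 L.toNNReal (0 + Btop * εtop) (t - 0)
      = (Btop * εtop / L) * (Real.exp (L * t) - 1) := by
    rw [gronwallBound]
    have hK0 : L.toNNReal ≠ 0 := by
      simp only [ne_eq, Real.toNNReal_eq_zero, not_le]; exact hL
    rw [if_neg (by exact_mod_cast fun h => hK0 (by exact_mod_cast h)), hKc]
    ring
  rw [hgb] at key
  refine ⟨key, key.trans ?_⟩
  have hc : 0 ≤ Btop * εtop / L := div_nonneg (mul_nonneg hBtop.le hεtop) hL.le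
  apply mul_le_mul_of_nonneg_left _ hc
  have := Real.exp_le_exp.mpr (mul_le_mul_of_nonneg_left ht.2 hL.le)
  linarith
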